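/- There exists a simple graph G = (V, E) with |V| = 2^{ℵ₀} such that: (1) G is special; (2) the chromatic number of G is ℵ₁, i.e. G has a proper coloring with colors in a set of cardinality ℵ₁ but no proper coloring with colors in a countable set; and (3) the edge relation of G has the independence property: for every n < ω there are vertices x_0,…,x_{n−1} of G and, for every subset S ⊆ {0,…,n−1}, a vertex y_S such that y_S is adjacent to x_i if and only if i ∈ S. -/

import Mathlib

open Cardinal

/-- A graph `G` is special if there is a (strict) partial order `≺` on its vertices such that
any two adjacent vertices are `≺`-comparable, and there is no circuit
`x_0, …, x_{n-1}` (`n ≥ 3`, pairwise distinct, consecutive vertices adjacent, and `x_{n-1}`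
adjacent to `x_0`) with `x_0 ≺ x_1 ≺ … ≺ x_m ≻ x_{m+1} ≻ … ≻ x_{n-1} ≻ x_0` for
some `0 < m < n - 1`. -/
def IsSpecialGraph {V : Type} (G : SimpleGraph V) : Prop :=
  ∃ lt : V → V → Prop,
    (∀ v : V, ¬ lt v v) ∧
    (∀ a b c : V, lt a b → lt b c → lt a c) ∧
    (∀ x y : V, G.Adj x y → lt x y ∨ lt y x) ∧
    ¬ ∃ (n : ℕ) (x : ℕ → V) (m : ℕ), 3 ≤ n ∧ 0 < m ∧ m < n - 1 ∧
        (∀ i < n, ∀ j < n, x i = x j → i = j) ∧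
        (∀ i : ℕ, i + 1 < n → G.Adj (x i) (x (i + 1))) ∧
        G.Adj (x (n - 1)) (x 0) ∧
        (∀ i < m, lt (x i) (x (i + 1))) ∧
        (∀ i : ℕ, m ≤ i → i + 1 < n → lt (x (i + 1)) (x i)) ∧
        lt (x 0) (x (n - 1))

namespace Stmt6Aux

/-- Vertices: well-founded trees with atoms labelled by reals (`ℕ → Bool`) and
countably-branching internal nodes. -/
inductive T : Type
  | atom : (ℕ → Bool) → T
  | node : (ℕ → T) → T

namespace T

/-- `x` is a child of `y`. -/
def Mm (x y : T) : Prop := ∃ (f : ℕ → T) (k : ℕ), y = node f ∧ f k = x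

noncomputable def rank : T → Ordinal.{0}
  | atom _ => 0
  | node f => ⨆ k, Order.succ (rank (f k))

theorem rank_lt_of_mm {x y : T} (h : Mm x y) : rank x < rank y := by
  obtain ⟨f, k, rfl, rfl⟩ := h
  have h1 : rank (f k) < Order.succ (rank (f k)) := Order.lt_succ _
  have h2 : Order.succ (rank (f k)) ≤ ⨆ j, Order.succ (rank (f j)) :=
    Ordinal.le_iSup (fun j => Order.succ (rank (f j))) k
  calc rank (f k) < Order.succ (rank (f k)) := h1
    _ ≤ _ := h2
    _ = rank (node f) := by rw [rank]

theorem rank_lt_of_tg {x y : T} (h : Relation.TransGen Mm x y) : rank x < rank y := by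
  induction h with
  | single h => exact rank_lt_of_mm h
  | tail _ h ih => exact ih.trans (rank_lt_of_mm h)

/-- The cone of `y`: all hereditary descendants of `y` (including `y`). -/
def cone (y : T) : Set T := {x | Relation.ReflTransGen Mm x y}

theorem self_mem_cone (y : T) : y ∈ cone y := Relation.ReflTransGen.refl

theorem cone_trans {x y z : T} (h : x ∈ cone y) (h' : y ∈ cone z) : x ∈ cone z :=
  Relation.ReflTransGen.trans h h'

theorem mem_cone_of_mm {x y : T} (h : Mm x y) : x ∈ cone y := Relation.ReflTransGen.single h

theorem rank_le_of_cone {x y : T} (h : x ∈ cone y) : rank x ≤ rank y := by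
  induction h with
  | refl => exact le_rfl
  | tail _ h ih => exact ih.trans (rank_lt_of_mm h).le

theorem mem_cone_node {x : T} {f : ℕ → T} (h : x ∈ cone (node f)) :
    x = node f ∨ ∃ k, x ∈ cone (f k) := by
  rcases Relation.ReflTransGen.cases_tail h with h | ⟨c, hc, hlast⟩
  · left; exact h.symm
  · obtain ⟨g, k, hg, rfl⟩ := hlast
    right; exact ⟨k, by rw [node.inj hg]; exact hc⟩

theorem cone_atom (a : ℕ → Bool) : cone (atom a) = {atom a} := by
  ext x
  constructor
  · intro h
    rcases Relation.ReflTransGen.cases_tail h with h | ⟨c, hc, hlast⟩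
    · simp [h]
    · obtain ⟨g, k, hg, rfl⟩ := hlast
      exact absurd hg (by simp)
  · rintro rfl; exact self_mem_cone _

theorem cone_countable : ∀ t : T, (cone t).Countable := by
  intro t
  induction t with
  | atom a => rw [cone_atom]; exact Set.countable_singleton _
  | node f ih =>
      have : cone (node f) ⊆ {node f} ∪ ⋃ k, cone (f k) := by
        intro x hx
        rcases mem_cone_node hx with h | ⟨k, hk⟩
        · exact Or.inl (by simp [h])
        · exact Or.inr (Set.mem_iUnion.mpr ⟨k, hk⟩)
      exact ((Set.countable_singleton _).union (Set.countable_iUnion ih)).mono this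

/-- A family of children is eligible if the cones of its members are pairwise
equal or disjoint. -/
def Elig (f : ℕ → T) : Prop := ∀ m n, f m = f n ∨ cone (f m) ∩ cone (f n) = ∅

def Adj (u v : T) : Prop :=
  (∃ f, Elig f ∧ u = node f ∧ ∃ k, f k = v) ∨ (∃ f, Elig f ∧ v = node f ∧ ∃ k, f k = u)

theorem mm_or_mm_of_adj {u v : T} (h : Adj u v) : Mm v u ∨ Mm u v := by
  rcases h with ⟨f, _, h1, k, h2⟩ | ⟨f, _, h1, k, h2⟩
  · exact Or.inl ⟨f, k, h1, h2⟩
  · exact Or.inr ⟨f, k, h1, h2⟩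

def G : SimpleGraph T where
  Adj := Adj
  symm := ⟨fun u v h => h.symm⟩
  loopless := by
    refine ⟨fun u h => ?_⟩
    rcases mm_or_mm_of_adj h with h | h <;> exact absurd (rank_lt_of_mm h) (lt_irrefl _)

theorem adj_orient {a b : T} (hadj : Adj a b) (hlt : Relation.TransGen Mm a b) :
    ∃ f, Elig f ∧ b = node f ∧ ∃ k, f k = a := by
  rcases hadj with ⟨f, hf, h1, k, h2⟩ | h
  · exfalso
    have h3 : Mm b a := ⟨f, k, h1, h2⟩
    exact absurd ((rank_lt_of_tg hlt).trans (rank_lt_of_mm h3)) (lt_irrefl _)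
  · exact h

theorem mm_of_adj_lt {a b : T} (hadj : Adj a b) (hlt : Relation.TransGen Mm a b) : Mm a b := by
  obtain ⟨f, _, h1, k, h2⟩ := adj_orient hadj hlt
  exact ⟨f, k, h1, h2⟩

/-! ### Specialness -/

theorem no_circuit :
    ¬ ∃ (n : ℕ) (x : ℕ → T) (m : ℕ), 3 ≤ n ∧ 0 < m ∧ m < n - 1 ∧
        (∀ i < n, ∀ j < n, x i = x j → i = j) ∧
        (∀ i : ℕ, i + 1 < n → Adj (x i) (x (i + 1))) ∧
        Adj (x (n - 1)) (x 0) ∧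
        (∀ i < m, Relation.TransGen Mm (x i) (x (i + 1))) ∧
        (∀ i : ℕ, m ≤ i → i + 1 < n → Relation.TransGen Mm (x (i + 1)) (x i)) ∧
        Relation.TransGen Mm (x 0) (x (n - 1)) := by
  rintro ⟨n, x, m, hn, hm0, hm, hinj, hadj, hlast, hup, hdn, h0⟩
  have hmn : m + 1 < n := by omega
  have hm1n : m - 1 < n := by omega
  have hup' : Relation.TransGen Mm (x (m - 1)) (x m) := by
    have := hup (m - 1) (by omega)
    rwa [show m - 1 + 1 = m by omega] at this
  have hadj' : Adj (x (m - 1)) (x m) := by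
    have := hadj (m - 1) (by omega)
    rwa [show m - 1 + 1 = m by omega] at this
  obtain ⟨f, hf, hnode, k1, hk1⟩ := adj_orient hadj' hup'
  have hdn' : Relation.TransGen Mm (x (m + 1)) (x m) := hdn m le_rfl hmn
  obtain ⟨f', hf', hnode', k2, hk2⟩ := adj_orient ((hadj m hmn).symm : Adj (x (m+1)) (x m)) hdn'
  have hff : f' = f := node.inj (hnode'.symm.trans hnode)
  subst hff
  have hcone1 : x 0 ∈ cone (x (m - 1)) := by
    have key : ∀ j, j ≤ m - 1 → x 0 ∈ cone (x j) := by
      intro j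
      induction j with
      | zero => intro _; exact self_mem_cone _
      | succ j ih =>
          intro hj
          have hjm : j < m := by omega
          have hmm : Mm (x j) (x (j + 1)) :=
            mm_of_adj_lt (hadj j (by omega)) (hup j hjm)
          exact cone_trans (ih (by omega)) (mem_cone_of_mm hmm)
    exact key _ le_rfl
  have hcone2 : x 0 ∈ cone (x (m + 1)) := by
    have key : ∀ d, m + 1 + d ≤ n - 1 → x (m + 1 + d) ∈ cone (x (m + 1)) := by
      intro d
      induction d with
      | zero => intro _; exact self_mem_cone _
      | succ d ih =>
          intro hd
          have hi : m + 1 + d + 1 < n := by omega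
          have hmm : Mm (x (m + 1 + d + 1)) (x (m + 1 + d)) :=
            mm_of_adj_lt ((hadj (m + 1 + d) hi).symm) (hdn (m + 1 + d) (by omega) hi)
          exact cone_trans (mem_cone_of_mm hmm) (ih (by omega))
    have hend : x (n - 1) ∈ cone (x (m + 1)) := by
      have := key ((n - 1) - (m + 1)) (by omega)
      rwa [show m + 1 + ((n - 1) - (m + 1)) = n - 1 by omega] at this
    have hmm0 : Mm (x 0) (x (n - 1)) := mm_of_adj_lt hlast.symm h0
    exact cone_trans (mem_cone_of_mm hmm0) hend
  rcases hf k1 k2 with heq | hdisj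
  · rw [hk1, hk2] at heq
    have := hinj _ hm1n _ hmn heq
    omega
  · rw [hk1, hk2] at hdisj
    have : x 0 ∈ cone (x (m - 1)) ∩ cone (x (m + 1)) := ⟨hcone1, hcone2⟩
    rw [hdisj] at this
    exact this

/-! ### The `ℵ₁`-coloring by rank -/

theorem rank_lt_omega1 : ∀ t : T, rank t < (aleph 1).ord := by
  intro t
  induction t with
  | atom a =>
      rw [rank]
      rw [Cardinal.lt_ord, Ordinal.card_zero]
      exact aleph_pos 1
  | node f ih =>
      rw [rank]
      apply Cardinal.iSup_lt_ord_of_isRegular isRegular_aleph_one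
      · rw [mk_nat]; exact aleph0_lt_aleph_one
      · intro k
        exact (Cardinal.isSuccLimit_ord (aleph0_le_aleph 1)).succ_lt (ih k)

noncomputable def col (t : T) : (aleph 1).ord.ToType :=
  Ordinal.ToType.mk (o := (aleph 1).ord) ⟨rank t, rank_lt_omega1 t⟩

theorem col_inj {u v : T} (h : rank u ≠ rank v) : col u ≠ col v := by
  intro hc
  apply h
  have := (Ordinal.ToType.mk (o := (aleph 1).ord)).injective hc
  exact congrArg Subtype.val this

theorem card_colors : #((aleph 1).ord.ToType) = aleph 1 := by
  rw [Cardinal.mk_toType, Cardinal.card_ord]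

/-! ### Cardinality of `T` -/

def label : T → List ℕ → Option ((ℕ → Bool) ⊕ Unit)
  | atom a, [] => some (Sum.inl a)
  | node _, [] => some (Sum.inr ())
  | atom _, _ :: _ => none
  | node f, k :: p => label (f k) p

theorem label_inj : Function.Injective label := by
  intro t₁
  induction t₁ with
  | atom a =>
      intro t₂ h
      cases t₂ with
      | atom b =>
          have := congrFun h []
          simp [label] at this
          rw [this]
      | node g =>
          have := congrFun h []
          simp [label] at this
  | node f ih =>
      intro t₂ h
      cases t₂ with
      | atom b =>
          have := congrFun h []
          simp [label] at this
      | node g =>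
          have hfg : ∀ k, f k = g k := by
            intro k
            apply ih k
            funext p
            exact congrFun h (k :: p)
          rw [funext hfg]

theorem card_T : #T = 2 ^ ℵ₀ := by
  apply le_antisymm
  · have h1 : #T ≤ #(List ℕ → Option ((ℕ → Bool) ⊕ Unit)) := mk_le_of_injective label_inj
    have h2 : #(List ℕ → Option ((ℕ → Bool) ⊕ Unit))
        = #(Option ((ℕ → Bool) ⊕ Unit)) ^ (ℵ₀ : Cardinal) := by
      rw [← Cardinal.power_def, mk_list_eq_aleph0]
    have hb : #(ℕ → Bool) = 2 ^ (ℵ₀ : Cardinal) := by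
      rw [← Cardinal.power_def, mk_bool, mk_nat]
    have h3 : #(Option ((ℕ → Bool) ⊕ Unit)) = 2 ^ (ℵ₀ : Cardinal) := by
      rw [mk_option, mk_sum, hb, mk_eq_one, Cardinal.lift_id, Cardinal.lift_id]
      have hle : ℵ₀ ≤ (2 : Cardinal) ^ (ℵ₀ : Cardinal) := (cantor ℵ₀).le
      rw [add_one_of_aleph0_le (le_trans hle le_self_add)]
      exact add_one_of_aleph0_le hle
    rw [h2, h3, ← Cardinal.power_mul, aleph0_mul_aleph0] at h1
    exact h1
  · have : #(ℕ → Bool) ≤ #T := mk_le_of_injective (fun a b h => atom.inj h)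
    rwa [← Cardinal.power_def, mk_bool, mk_nat] at this

/-! ### No countable coloring -/

abbrev Kappa : Type := (aleph 1).ord.ToType

theorem countable_lt (ξ : Kappa) : ({η : Kappa | η < ξ}).Countable := by
  have h := Cardinal.mk_Iio_ord_toType ξ
  have ha : aleph 1 = Order.succ (ℵ₀ : Cardinal) := by
    rw [← aleph_zero, ← aleph_succ, Ordinal.succ_zero]
  have h2 : #↑(Set.Iio ξ) ≤ ℵ₀ := Order.lt_succ_iff.mp (h.trans_eq ha)
  rw [← Set.countable_coe_iff]
  exact mk_le_aleph0_iff.mp h2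

theorem not_countable_univ_kappa : ¬ (Set.univ : Set Kappa).Countable := by
  intro h
  have h2 : #Kappa ≤ ℵ₀ := mk_le_aleph0_iff.mpr (Set.countable_univ_iff.mp h)
  rw [Cardinal.mk_toType, Cardinal.card_ord] at h2
  exact absurd h2 (not_le.mpr aleph0_lt_aleph_one)

theorem exists_big_fiber (g : Kappa → ℕ) : ∃ n, ¬ ({i : Kappa | g i = n}).Countable := by
  by_contra hcon
  push_neg at hcon
  apply not_countable_univ_kappa
  have h : (Set.univ : Set Kappa) = ⋃ n, {i : Kappa | g i = n} := by ext i; simp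
  rw [h]
  exact Set.countable_iUnion fun n => hcon n

theorem fresh_member (Fs : ℕ → Kappa → T)
    (hFs : ∀ (j : ℕ) (ι ι' : Kappa), ι ≠ ι' → cone (Fs j ι) ∩ cone (Fs j ι') = ∅)
    (j : ℕ) (used : Set T) (hU : used.Countable) :
    ∃ ι : Kappa, ∀ u ∈ used, cone (Fs j ι) ∩ cone u = ∅ := by
  classical
  have inner : ∀ u : T, {ι : Kappa | (cone (Fs j ι) ∩ cone u).Nonempty}.Countable := by
    intro u
    haveI : Countable ↥(cone u) := (cone_countable u).to_subtype
    rw [← Set.countable_coe_iff]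
    set A := {ι : Kappa | (cone (Fs j ι) ∩ cone u).Nonempty} with hA
    have hpt : ∀ ι : ↥A, ∃ t, t ∈ cone (Fs j ι.1) ∩ cone u := fun ι => ι.2
    choose pt hpt using hpt
    have hinj : Function.Injective (fun ι : ↥A => (⟨pt ι, (hpt ι).2⟩ : ↥(cone u))) := by
      intro ι ι' he
      have hv : pt ι = pt ι' := congrArg Subtype.val he
      by_contra hne
      have hne' : ι.1 ≠ ι'.1 := fun hh => hne (Subtype.ext hh)
      have hd := hFs j ι.1 ι'.1 hne'
      have hmem : pt ι ∈ cone (Fs j ι.1) ∩ cone (Fs j ι'.1) :=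
        ⟨(hpt ι).1, hv ▸ (hpt ι').1⟩
      rw [hd] at hmem
      exact hmem
    exact hinj.countable
  have hKc : ({ι : Kappa | ∃ u ∈ used, (cone (Fs j ι) ∩ cone u).Nonempty}).Countable := by
    apply Set.Countable.mono ?_ (Set.Countable.biUnion hU fun u _ => inner u)
    intro ι hι
    obtain ⟨u, hu, hne⟩ := hι
    exact Set.mem_biUnion hu hne
  have : ∃ ι : Kappa, ι ∉ {ι : Kappa | ∃ u ∈ used, (cone (Fs j ι) ∩ cone u).Nonempty} := by
    by_contra hcon
    push_neg at hcon
    exact not_countable_univ_kappa (hKc.mono fun ι _ => hcon ι)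
  obtain ⟨ι, hι⟩ := this
  refine ⟨ι, fun u hu => ?_⟩
  rw [← Set.not_nonempty_iff_eq_empty]
  exact fun hne => hι ⟨u, hu, hne⟩

noncomputable def gg (Fs : ℕ → Kappa → T)
    (hFs : ∀ (j : ℕ) (ι ι' : Kappa), ι ≠ ι' → cone (Fs j ι) ∩ cone (Fs j ι') = ∅)
    (used : Set T) (hU : used.Countable) : ℕ → T
  | j =>
    Fs j (Classical.choose (fresh_member Fs hFs j
      (used ∪ ⋃ j' : Fin j, cone (gg Fs hFs used hU j'.1))
      (hU.union (Set.countable_iUnion fun j' => cone_countable _))))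
  termination_by j => j
  decreasing_by all_goals exact j'.2

theorem gg_spec (Fs : ℕ → Kappa → T)
    (hFs : ∀ (j : ℕ) (ι ι' : Kappa), ι ≠ ι' → cone (Fs j ι) ∩ cone (Fs j ι') = ∅)
    (used : Set T) (hU : used.Countable) (j : ℕ) :
    (∃ ι, gg Fs hFs used hU j = Fs j ι) ∧
    (∀ u ∈ used, cone (gg Fs hFs used hU j) ∩ cone u = ∅) ∧
    (∀ j' : ℕ, j' < j → cone (gg Fs hFs used hU j) ∩ cone (gg Fs hFs used hU j') = ∅) := by
  have hg : gg Fs hFs used hU j = Fs j (Classical.choose (fresh_member Fs hFs j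
      (used ∪ ⋃ j' : Fin j, cone (gg Fs hFs used hU j'.1))
      (hU.union (Set.countable_iUnion fun j' => cone_countable _)))) := by
    rw [gg]
  have hspec := Classical.choose_spec (fresh_member Fs hFs j
      (used ∪ ⋃ j' : Fin j, cone (gg Fs hFs used hU j'.1))
      (hU.union (Set.countable_iUnion fun j' => cone_countable _)))
  refine ⟨⟨_, hg⟩, ?_, ?_⟩
  · intro u hu
    rw [hg]
    exact hspec u (Set.mem_union_left _ hu)
  · intro j' hj'
    rw [hg]
    apply hspec
    apply Set.mem_union_right
    exact Set.mem_iUnion.mpr ⟨⟨j', hj'⟩, self_mem_cone _⟩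

noncomputable def PickF (Fs : ℕ → Kappa → T)
    (hFs : ∀ (j : ℕ) (ι ι' : Kappa), ι ≠ ι' → cone (Fs j ι) ∩ cone (Fs j ι') = ∅) :
    Kappa → ℕ → T :=
  (IsWellFounded.wf (α := Kappa) (r := (· < ·))).fix
    (fun i rec =>
      gg Fs hFs (⋃ i' : {i' : Kappa // i' < i}, ⋃ j, cone (rec i'.1 i'.2 j))
        (by
          haveI : Countable {i' : Kappa // i' < i} := (countable_lt i).to_subtype
          exact Set.countable_iUnion fun i' =>
            Set.countable_iUnion fun j => cone_countable _))

theorem PickF_eq (Fs : ℕ → Kappa → T)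
    (hFs : ∀ (j : ℕ) (ι ι' : Kappa), ι ≠ ι' → cone (Fs j ι) ∩ cone (Fs j ι') = ∅) (i : Kappa) :
    PickF Fs hFs i = gg Fs hFs (⋃ i' : {i' : Kappa // i' < i}, ⋃ j, cone (PickF Fs hFs i'.1 j))
      (by
        haveI : Countable {i' : Kappa // i' < i} := (countable_lt i).to_subtype
        exact Set.countable_iUnion fun i' =>
          Set.countable_iUnion fun j => cone_countable _) := by
  exact WellFounded.fix_eq _ _ i

theorem PickF_spec (Fs : ℕ → Kappa → T)
    (hFs : ∀ (j : ℕ) (ι ι' : Kappa), ι ≠ ι' → cone (Fs j ι) ∩ cone (Fs j ι') = ∅) (i : Kappa) :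
    (∀ j, ∃ ι, PickF Fs hFs i j = Fs j ι) ∧
    (∀ j j' : ℕ, j' < j → cone (PickF Fs hFs i j) ∩ cone (PickF Fs hFs i j') = ∅) ∧
    (∀ i' : Kappa, i' < i → ∀ j j' : ℕ,
       cone (PickF Fs hFs i j) ∩ cone (PickF Fs hFs i' j') = ∅) := by
  have he := PickF_eq Fs hFs i
  refine ⟨?_, ?_, ?_⟩
  · intro j; rw [he]; exact (gg_spec _ _ _ _ j).1
  · intro j j' h; rw [he]; exact (gg_spec _ _ _ _ j).2.2 j' h
  · intro i' hi' j j'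
    rw [he]
    apply (gg_spec _ _ _ _ j).2.1
    exact Set.mem_iUnion.mpr ⟨⟨i', hi'⟩, Set.mem_iUnion.mpr ⟨j', self_mem_cone _⟩⟩

theorem pick_disj (Fs : ℕ → Kappa → T)
    (hFs : ∀ (j : ℕ) (ι ι' : Kappa), ι ≠ ι' → cone (Fs j ι) ∩ cone (Fs j ι') = ∅) :
    ∀ (i : Kappa) (j : ℕ) (i' : Kappa) (j' : ℕ), (i ≠ i' ∨ j ≠ j') →
      cone (PickF Fs hFs i j) ∩ cone (PickF Fs hFs i' j') = ∅ := by
  intro i j i' j' hne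
  rcases lt_trichotomy i i' with hi | hii | hi
  · rw [Set.inter_comm]; exact (PickF_spec Fs hFs i').2.2 i hi j' j
  · subst hii
    have hj : j ≠ j' := by
      rcases hne with h | h
      · exact absurd rfl h
      · exact h
    rcases lt_trichotomy j j' with hjj | hjj | hjj
    · rw [Set.inter_comm]; exact (PickF_spec Fs hFs i).2.1 j' j hjj
    · exact absurd hjj hj
    · exact (PickF_spec Fs hFs i).2.1 j j' hjj
  · exact (PickF_spec Fs hFs i).2.2 i' hi j j'

theorem no_countable_coloring :
    ¬ ∃ (C : Type) (c : T → C), #C ≤ ℵ₀ ∧ ∀ u v : T, G.Adj u v → c u ≠ c v := by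
  classical
  rintro ⟨C, c0, hC, hp⟩
  obtain ⟨em⟩ : Nonempty (C ↪ ℕ) := by
    rw [← mk_nat] at hC
    exact (Cardinal.le_def _ _).mp hC
  set c : T → ℕ := fun t => em (c0 t) with hcdef
  have hcp : ∀ u v : T, Adj u v → c u ≠ c v := fun u v h hq => hp u v h (em.injective hq)
  -- Zorn's lemma on "good systems" of monochromatic κ-families with pairwise disjoint cones
  let S : Set (Set (ℕ × (Kappa → T))) :=
    {p | (∀ q ∈ p, (∀ i, c (q.2 i) = q.1) ∧
            (∀ i i' : Kappa, i ≠ i' → cone (q.2 i) ∩ cone (q.2 i') = ∅)) ∧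
         (∀ q ∈ p, ∀ q' ∈ p, q.1 = q'.1 → q = q')}
  have hchains : ∀ ch ⊆ S, IsChain (· ⊆ ·) ch → ∃ ub ∈ S, ∀ s ∈ ch, s ⊆ ub := by
    intro ch hchS hchain
    refine ⟨⋃₀ ch, ⟨?_, ?_⟩, fun s hs => Set.subset_sUnion_of_mem hs⟩
    · rintro q ⟨s, hs, hq⟩
      exact (hchS hs).1 q hq
    · rintro q ⟨s, hs, hq⟩ q' ⟨s', hs', hq'⟩ hqq
      rcases hchain.total hs hs' with h | h
      · exact (hchS hs').2 q (h hq) q' hq' hqq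
      · exact (hchS hs).2 q hq q' (h hq') hqq
  obtain ⟨p, hpmax⟩ := zorn_subset S hchains
  have hpS : p ∈ S := hpmax.prop
  -- `p` is countable
  have hpcnt : p.Countable := by
    have hinj : Set.InjOn Prod.fst p := by
      intro q hq q' hq' h
      exact hpS.2 q hq q' hq' h
    exact Set.countable_of_injective_of_countable_image hinj (Set.to_countable _)
  -- the atom family
  obtain ⟨ab⟩ : Nonempty (Kappa ↪ (ℕ → Bool)) := by
    rw [← Cardinal.le_def]
    have h1 : #Kappa = aleph 1 := by rw [Cardinal.mk_toType, Cardinal.card_ord]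
    have hb : #(ℕ → Bool) = 2 ^ (ℵ₀ : Cardinal) := by
      rw [← Cardinal.power_def, mk_bool, mk_nat]
    rw [h1, hb, Cardinal.two_power_aleph0]
    exact aleph_one_le_continuum
  set A0 : Kappa → T := fun ι => atom (ab ι) with hA0def
  have hA0 : ∀ (ι ι' : Kappa), ι ≠ ι' → cone (A0 ι) ∩ cone (A0 ι') = ∅ := by
    intro ι ι' hne
    rw [← Set.not_nonempty_iff_eq_empty]
    rintro ⟨v, hv, hv'⟩
    simp only [hA0def, cone_atom, Set.mem_singleton_iff] at hv hv'
    exact hne (ab.injective (atom.inj (hv ▸ hv')))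
  -- an enumeration of the slot families: slot 0 is the atoms, slots k+1 cover `p`
  obtain ⟨e, hecov, hedisj⟩ : ∃ e : ℕ → ℕ × (Kappa → T),
      (∀ q ∈ p, ∃ k, e k = q) ∧
      (∀ (k : ℕ) (i i' : Kappa), i ≠ i' → cone ((e k).2 i) ∩ cone ((e k).2 i') = ∅) := by
    rcases p.eq_empty_or_nonempty with hpe | hne
    · refine ⟨fun _ => (0, A0), ?_, fun k => hA0⟩
      intro q hq
      rw [hpe] at hq
      exact absurd hq (Set.notMem_empty q)
    · obtain ⟨f, hf⟩ := hpcnt.exists_eq_range hne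
      refine ⟨f, ?_, ?_⟩
      · intro q hq
        rw [hf] at hq
        obtain ⟨k, hk⟩ := hq
        exact ⟨k, hk⟩
      · intro k
        have : f k ∈ p := by rw [hf]; exact ⟨k, rfl⟩
        exact (hpS.1 (f k) this).2
  set Fs : ℕ → Kappa → T := fun j => Nat.casesOn j A0 (fun k => (e k).2) with hFsdef
  have hFs : ∀ (j : ℕ) (ι ι' : Kappa), ι ≠ ι' → cone (Fs j ι) ∩ cone (Fs j ι') = ∅ := by
    intro j
    cases j with
    | zero => exact hA0
    | succ k => exact hedisj k
  set P : Kappa → ℕ → T := PickF Fs hFs with hPdef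
  have hPspec1 : ∀ (i : Kappa) (j : ℕ), ∃ ι, P i j = Fs j ι :=
    fun i => (PickF_spec Fs hFs i).1
  have hPdisj : ∀ (i : Kappa) (j : ℕ) (i' : Kappa) (j' : ℕ), (i ≠ i' ∨ j ≠ j') →
      cone (P i j) ∩ cone (P i' j') = ∅ := pick_disj Fs hFs
  set z : Kappa → T := fun i => node (P i) with hzdef
  have hElig : ∀ i, Elig (P i) := by
    intro i m n
    by_cases hmn : m = n
    · exact Or.inl (by rw [hmn])
    · exact Or.inr (hPdisj i m i n (Or.inr hmn))
  have hAdjz : ∀ i j, Adj (z i) (P i j) := by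
    intro i j
    exact Or.inl ⟨P i, hElig i, rfl, j, rfl⟩
  -- the color of z i avoids all colors appearing in p
  have havoid : ∀ (i : Kappa), ∀ q ∈ p, c (z i) ≠ q.1 := by
    intro i q hq
    obtain ⟨k, hk⟩ := hecov q hq
    obtain ⟨ι, hι⟩ := hPspec1 i (k + 1)
    have hcol : c (P i (k + 1)) = q.1 := by
      rw [hι]
      have : Fs (k + 1) = (e k).2 := rfl
      rw [this, hk]
      exact (hpS.1 q hq).1 ι
    intro hcontra
    exact hcp (z i) (P i (k + 1)) (hAdjz i (k + 1)) (hcontra.trans hcol.symm)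
  obtain ⟨nstar, hnstar⟩ := exists_big_fiber (fun i => c (z i))
  set U := {i : Kappa | c (z i) = nstar} with hUdef
  have hUne : U.Nonempty := by
    rcases U.eq_empty_or_nonempty with h | h
    · exact absurd (h ▸ Set.countable_empty) hnstar
    · exact h
  have hfresh : ∀ q ∈ p, q.1 ≠ nstar := by
    intro q hq hcontra
    obtain ⟨i0, hi0⟩ := hUne
    exact havoid i0 q hq (hi0.trans hcontra.symm)
  -- the new family
  have hzdis : ∀ i i' : Kappa, i ≠ i' → cone (z i) ∩ cone (z i') = ∅ := by
    intro i i' hne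
    rw [← Set.not_nonempty_iff_eq_empty]
    rintro ⟨v, hv, hv'⟩
    have hstep : ∀ (a b : Kappa), a ≠ b → v = z a → v ∈ cone (z b) → False := by
      intro a b hab hva hvb
      rcases mem_cone_node hvb with hvb' | ⟨j, hvb'⟩
      · -- z a = z b
        have : P a = P b := node.inj (hva.symm.trans hvb')
        have hmem : P a 0 ∈ cone (P a 0) ∩ cone (P b 0) :=
          ⟨self_mem_cone _, this ▸ self_mem_cone _⟩
        rw [hPdisj a 0 b 0 (Or.inl hab)] at hmem
        exact hmem
      · -- z a ∈ cone (P b j)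
        have hmm : Mm (P a 0) (z a) := ⟨P a, 0, rfl, rfl⟩
        have h1 : P a 0 ∈ cone (P b j) :=
          cone_trans (mem_cone_of_mm hmm) (hva ▸ hvb')
        have hmem : P a 0 ∈ cone (P a 0) ∩ cone (P b j) := ⟨self_mem_cone _, h1⟩
        rw [hPdisj a 0 b j (Or.inl hab)] at hmem
        exact hmem
    rcases mem_cone_node hv with hva | ⟨j, hva⟩
    · exact hstep i i' hne hva hv'
    · rcases mem_cone_node hv' with hvb | ⟨j', hvb⟩
      · exact hstep i' i (Ne.symm hne) hvb hv
      · have hmem : v ∈ cone (P i j) ∩ cone (P i' j') := ⟨hva, hvb⟩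
        rw [hPdisj i j i' j' (Or.inl hne)] at hmem
        exact hmem
  have hUcard : #Kappa = #↥U := by
    apply le_antisymm
    · have h1 : #Kappa = aleph 1 := by rw [Cardinal.mk_toType, Cardinal.card_ord]
      rw [h1]
      have h2 : ¬ (#↥U ≤ ℵ₀) := by
        intro hle
        exact hnstar (Set.countable_coe_iff.mpr (mk_le_aleph0_iff.mp hle))
      have h3 : ℵ₀ < #↥U := not_le.mp h2
      have ha : aleph 1 = Order.succ (ℵ₀ : Cardinal) := by
        rw [← aleph_zero, ← aleph_succ, Ordinal.succ_zero]
      rw [ha]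
      exact Order.succ_le_of_lt h3
    · exact mk_subtype_le _
  obtain ⟨eqv⟩ : Nonempty (Kappa ≃ ↥U) := Cardinal.eq.mp hUcard
  set Fstar : Kappa → T := fun ι => z (eqv ι).1 with hFstardef
  have hq1 : ∀ ι, c (Fstar ι) = nstar := fun ι => (eqv ι).2
  have hq2 : ∀ ι ι' : Kappa, ι ≠ ι' → cone (Fstar ι) ∩ cone (Fstar ι') = ∅ := by
    intro ι ι' hne
    apply hzdis
    intro h
    exact hne (eqv.injective (Subtype.ext h))
  have hnotin : (nstar, Fstar) ∉ p := by
    intro hmem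
    exact hfresh _ hmem rfl
  have hS' : insert (nstar, Fstar) p ∈ S := by
    constructor
    · intro q hq
      rcases Set.mem_insert_iff.mp hq with rfl | hq
      · exact ⟨hq1, hq2⟩
      · exact hpS.1 q hq
    · intro q hq q' hq' hqq
      rcases Set.mem_insert_iff.mp hq with hq1 | hq1 <;>
        rcases Set.mem_insert_iff.mp hq' with hq2 | hq2
      · rw [hq1, hq2]
      · exfalso; apply hfresh q' hq2; rw [← hqq, hq1]
      · exfalso; apply hfresh q hq1; rw [hqq, hq2]
      · exact hpS.2 q hq1 q' hq2 hqq
  have hsub := hpmax.2 hS' (Set.subset_insert _ _)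
  exact hnotin (hsub (Set.mem_insert _ _))

/-! ### Independence property helpers -/

theorem atom_ne_node (a : ℕ → Bool) (f : ℕ → T) : atom a ≠ node f := by
  intro h
  exact T.noConfusion h

theorem elig_of_atoms {f : ℕ → T} (h : ∀ k, ∃ a, f k = atom a) : Elig f := by
  intro m n
  by_cases he : f m = f n
  · exact Or.inl he
  · right
    obtain ⟨a, ha⟩ := h m
    obtain ⟨b, hb⟩ := h n
    rw [ha, hb, cone_atom, cone_atom]
    rw [← Set.not_nonempty_iff_eq_empty]
    rintro ⟨v, hv, hv'⟩
    simp only [Set.mem_singleton_iff] at hv hv'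
    apply he
    rw [ha, hb, ← hv, hv']

end T
end Stmt6Aux

theorem stmt_6 :
    ∃ (V : Type) (G : SimpleGraph V), #V = 2 ^ ℵ₀ ∧
      -- (1) `G` is special
      IsSpecialGraph G ∧
      -- (2) the chromatic number of `G` is `ℵ₁`
      (∃ (C : Type) (c : V → C), #C = aleph 1 ∧ ∀ x y : V, G.Adj x y → c x ≠ c y) ∧
      (¬ ∃ (C : Type) (c : V → C), #C ≤ ℵ₀ ∧ ∀ x y : V, G.Adj x y → c x ≠ c y) ∧
      -- (3) the edge relation has the independence property
      (∀ n : ℕ, ∃ x : Fin n → V, ∀ S : Set (Fin n), ∃ y : V,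
        ∀ i : Fin n, G.Adj y (x i) ↔ i ∈ S) := by
  classical
  refine ⟨Stmt6Aux.T, Stmt6Aux.T.G, Stmt6Aux.T.card_T, ?_, ?_, ?_, ?_⟩
  · -- specialness
    refine ⟨Relation.TransGen Stmt6Aux.T.Mm, ?_, ?_, ?_, ?_⟩
    · intro v h
      exact absurd (Stmt6Aux.T.rank_lt_of_tg h) (lt_irrefl _)
    · intro a b c h1 h2
      exact h1.trans h2
    · intro x y h
      rcases Stmt6Aux.T.mm_or_mm_of_adj h with h | h
      · exact Or.inr (Relation.TransGen.single h)
      · exact Or.inl (Relation.TransGen.single h)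
    · exact Stmt6Aux.T.no_circuit
  · -- ℵ₁-coloring
    refine ⟨(aleph 1).ord.ToType, Stmt6Aux.T.col, Stmt6Aux.T.card_colors, ?_⟩
    intro x y h
    apply Stmt6Aux.T.col_inj
    rcases Stmt6Aux.T.mm_or_mm_of_adj h with h | h
    · exact (Stmt6Aux.T.rank_lt_of_mm h).ne'
    · exact (Stmt6Aux.T.rank_lt_of_mm h).ne
  · -- no countable coloring
    exact Stmt6Aux.T.no_countable_coloring
  · -- independence property
    intro n
    set xv : Fin n → Stmt6Aux.T := fun i => Stmt6Aux.T.atom (fun m => decide (m = (i : ℕ)))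
      with hxvdef
    have hxinj : ∀ i i' : Fin n, xv i = xv i' → i = i' := by
      intro i i' h
      have h2 := Stmt6Aux.T.atom.inj h
      have h3 := congrFun h2 (i : ℕ)
      simp only [decide_eq_decide] at h3
      have h4 : (i : ℕ) = (i' : ℕ) := h3.mp trivial
      exact Fin.ext h4
    refine ⟨xv, ?_⟩
    intro S
    by_cases hS : S.Nonempty
    · obtain ⟨s0, hs0⟩ := hS
      set g : ℕ → Fin n := fun k =>
        if h : ∃ i : Fin n, i ∈ S ∧ (i : ℕ) = k then h.choose else s0 with hgdef
      have hgval : ∀ k, g k = if h : ∃ i : Fin n, i ∈ S ∧ (i : ℕ) = k then h.choose else s0 :=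
        fun k => rfl
      have hgS : ∀ k, g k ∈ S := by
        intro k
        rw [hgval k]
        by_cases h : ∃ i : Fin n, i ∈ S ∧ (i : ℕ) = k
        · rw [dif_pos h]; exact h.choose_spec.1
        · rw [dif_neg h]; exact hs0
      set f : ℕ → Stmt6Aux.T := fun k => xv (g k) with hfdef
      have hfatoms : ∀ k, ∃ a, f k = Stmt6Aux.T.atom a := fun k => ⟨_, rfl⟩
      have hElig : Stmt6Aux.T.Elig f := Stmt6Aux.T.elig_of_atoms hfatoms
      have hfval : ∀ i : Fin n, i ∈ S → f (i : ℕ) = xv i := by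
        intro i hi
        have hex : ∃ i' : Fin n, i' ∈ S ∧ (i' : ℕ) = (i : ℕ) := ⟨i, hi, rfl⟩
        have hgi : g (i : ℕ) = i := by
          rw [hgval (i : ℕ), dif_pos hex]
          exact Fin.ext hex.choose_spec.2
        show xv (g (i : ℕ)) = xv i
        rw [hgi]
      refine ⟨Stmt6Aux.T.node f, ?_⟩
      intro i
      constructor
      · rintro (⟨f', hf', hy, k, hk⟩ | ⟨f', hf', hx, k, hk⟩)
        · have hffeq : f' = f := Stmt6Aux.T.node.inj hy.symm
          rw [hffeq] at hk
          have : xv (g k) = xv i := hk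
          have := hxinj _ _ this
          rw [← this]
          exact hgS k
        · exact absurd hx (Stmt6Aux.T.atom_ne_node _ _)
      · intro hi
        exact Or.inl ⟨f, hElig, rfl, (i : ℕ), hfval i hi⟩
    · refine ⟨Stmt6Aux.T.atom (fun _ => false), ?_⟩
      intro i
      constructor
      · rintro (⟨f', hf', hy, k, hk⟩ | ⟨f', hf', hx, k, hk⟩)
        · exact absurd hy (Stmt6Aux.T.atom_ne_node _ _)
        · exact absurd hx (Stmt6Aux.T.atom_ne_node _ _)
      · intro hi
        exact absurd ⟨i, hi⟩ hS
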